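/- Let α > 1 be a real number with the Pisot property (there exists a nonzero real ζ with ‖ζ·α^k‖ → 0), let k₁ be an integer and k₂ ≥ 1 an integer with gcd(k₁, k₂) = 1, and set β := ((α−1)/ln α)·(k₁/k₂). Then there exists an (α,β)-admissible sequence (n_k)_{k≥0} (strictly increasing positive integers with bounded phase sequence σ_k := n_{k+1} − α·n_k − β·ln(n_k)) whose phase sequence converges to a cycle of period k₂, i.e. for each 0 ≤ j < k₂ the subsequence (σ_{k·k₂+j})_{k≥0} converges. -/

import Mathlib

open Filter Topology Asymptotics

/-- The phase sequence of a sequence of positive integers relative to `α` and `β`: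
`σ_k = n_{k+1} - α n_k - β ln n_k`. -/
noncomputable def phaseSeq (α β : ℝ) (n : ℕ → ℕ) (k : ℕ) : ℝ :=
  (n (k + 1) : ℝ) - α * (n k : ℝ) - β * Real.log (n k)

section Aux

/-- residue sequence -/
def rAux (k₁ : ℤ) (k₂ : ℕ) (k : ℕ) : ℤ := (k₁ * k) % (k₂ : ℤ)

/-- the integer sequence before shifting -/
noncomputable def mAux (ζ α : ℝ) (k₁ : ℤ) (k₂ : ℕ) (k : ℕ) : ℤ :=
  round (ζ * α ^ k) - (k₁ * k) / (k₂ : ℤ)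

lemma rAux_periodic (k₁ : ℤ) (k₂ : ℕ) (a j : ℕ) :
    rAux k₁ k₂ (a * k₂ + j) = rAux k₁ k₂ j := by
  unfold rAux
  have h : k₁ * ((a * k₂ + j : ℕ) : ℤ) = k₁ * (j : ℤ) + (k₁ * a) * (k₂ : ℤ) := by
    push_cast; ring
  rw [h, Int.add_mul_emod_self_right]

lemma rAux_nonneg (k₁ : ℤ) (k₂ : ℕ) (hk₂ : 0 < k₂) (k : ℕ) : 0 ≤ rAux k₁ k₂ k :=
  Int.emod_nonneg _ (by exact_mod_cast hk₂.ne')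

lemma rAux_lt (k₁ : ℤ) (k₂ : ℕ) (hk₂ : 0 < k₂) (k : ℕ) : rAux k₁ k₂ k < (k₂ : ℤ) :=
  Int.emod_lt_of_pos _ (by exact_mod_cast hk₂)

lemma mAux_eq (ζ α : ℝ) (k₁ : ℤ) (k₂ : ℕ) (hk₂ : 0 < k₂) (k : ℕ) :
    ((mAux ζ α k₁ k₂ k : ℤ) : ℝ) = ζ * α ^ k
      + (((round (ζ * α ^ k)) : ℝ) - ζ * α ^ k)
      - ((k₁ : ℝ) * (k : ℝ) - ((rAux k₁ k₂ k : ℤ) : ℝ)) / (k₂ : ℝ) := by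
  have hk₂' : ((k₂ : ℕ) : ℝ) ≠ 0 := by exact_mod_cast hk₂.ne'
  have hdm := Int.mul_ediv_add_emod (k₁ * (k : ℤ)) (k₂ : ℤ)
  have hdiv : (((k₁ * (k : ℤ)) / (k₂ : ℤ) : ℤ) : ℝ)
      = ((k₁ : ℝ) * (k : ℝ) - ((rAux k₁ k₂ k : ℤ) : ℝ)) / (k₂ : ℝ) := by
    rw [eq_div_iff hk₂']
    have hz : ((k₁ * (k : ℤ)) / (k₂ : ℤ)) * (k₂ : ℤ) = k₁ * (k : ℤ) - rAux k₁ k₂ k := by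
      unfold rAux
      linear_combination hdm
    exact_mod_cast hz
  unfold mAux
  push_cast [hdiv]
  ring

end Aux

set_option maxHeartbeats 1600000 in
/-- If `α > 1` has the Pisot property and `β = ((α-1)/ln α) · (k₁/k₂)` with `k₁, k₂` coprime
integers, `k₂ ≥ 1`, then there exists an `(α,β)`-admissible sequence whose phase sequence
converges to a cycle of period `k₂`. -/
theorem exists_admissible_phase_cycle_of_pisot (α : ℝ) (hα : 1 < α)
    (hpisot : ∃ ζ : ℝ, ζ ≠ 0 ∧
      Tendsto (fun k : ℕ => |ζ * α ^ k - (round (ζ * α ^ k) : ℝ)|) atTop (𝓝 0))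
    (k₁ : ℤ) (k₂ : ℕ) (hk₂ : 1 ≤ k₂) (hcop : Int.gcd k₁ (k₂ : ℤ) = 1)
    (β : ℝ) (hβ : β = ((α - 1) / Real.log α) * ((k₁ : ℝ) / (k₂ : ℝ))) :
    ∃ n : ℕ → ℕ, StrictMono n ∧ (∀ k, 0 < n k) ∧
      (∃ C : ℝ, ∀ k, |phaseSeq α β n k| ≤ C) ∧
      ∀ j < k₂, ∃ L : ℝ,
        Tendsto (fun k => phaseSeq α β n (k * k₂ + j)) atTop (𝓝 L) := by
  have hα0 : (0:ℝ) < α := lt_trans one_pos hα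
  have hk₂0 : 0 < k₂ := hk₂
  have hk₂R : (0:ℝ) < (k₂ : ℝ) := by exact_mod_cast hk₂0
  have hlogα : 0 < Real.log α := Real.log_pos hα
  -- WLOG ζ > 0
  obtain ⟨ζ₀, hζ₀ne, hζ₀⟩ := hpisot
  obtain ⟨ζ, hζpos, hζ⟩ :
      ∃ ζ : ℝ, 0 < ζ ∧
        Tendsto (fun k : ℕ => |ζ * α ^ k - (round (ζ * α ^ k) : ℝ)|) atTop (𝓝 0) := by
    rcases hζ₀ne.lt_or_gt with hneg | hpos
    · refine ⟨-ζ₀, by linarith, ?_⟩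
      refine squeeze_zero (fun k => abs_nonneg _) (fun k => ?_) hζ₀
      calc |(-ζ₀) * α ^ k - (round ((-ζ₀) * α ^ k) : ℝ)|
          ≤ |(-ζ₀) * α ^ k - ((-(round (ζ₀ * α ^ k)) : ℤ) : ℝ)| := round_le _ _
        _ = |ζ₀ * α ^ k - (round (ζ₀ * α ^ k) : ℝ)| := by
            push_cast
            rw [← abs_neg]
            ring_nf
    · exact ⟨ζ₀, hpos, hζ₀⟩
  set r : ℕ → ℤ := rAux k₁ k₂ with hr
  set m : ℕ → ℤ := mAux ζ α k₁ k₂ with hm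
  set ε : ℕ → ℝ := fun k => ((round (ζ * α ^ k)) : ℝ) - ζ * α ^ k with hεdef
  set w : ℕ → ℝ := fun k => ζ * α ^ k with hwdef
  set u : ℕ → ℝ := fun k => ((m k : ℤ) : ℝ) with hudef
  have hwpos : ∀ k, 0 < w k := fun k => mul_pos hζpos (pow_pos hα0 k)
  have hwsucc : ∀ k, w (k + 1) = α * w k := by
    intro k
    simp only [hwdef, pow_succ]
    ring
  have hε0 : Tendsto ε atTop (𝓝 0) := by
    refine squeeze_zero_norm (fun k => ?_) hζ
    simp only [hεdef, Real.norm_eq_abs]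
    rw [abs_sub_comm]
  have hεb : ∀ k, |ε k| ≤ 1/2 := by
    intro k
    rw [hεdef, abs_sub_comm]
    exact abs_sub_round _
  have hu_eq : ∀ k, u k = w k + ε k - ((k₁ : ℝ) * (k : ℝ) - ((r k : ℤ) : ℝ)) / (k₂ : ℝ) :=
    fun k => mAux_eq ζ α k₁ k₂ hk₂0 k
  have hrb : ∀ k, (0:ℝ) ≤ ((r k : ℤ) : ℝ) ∧ ((r k : ℤ) : ℝ) < (k₂ : ℝ) := by
    intro k
    constructor
    · exact_mod_cast rAux_nonneg k₁ k₂ hk₂0 k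
    · exact_mod_cast rAux_lt k₁ k₂ hk₂0 k
  -- |u - w| ≤ 3/2 + |k₁| * k
  have hbound : ∀ k, |u k - w k| ≤ 3/2 + |(k₁:ℝ)| * k := by
    intro k
    have h1 := hεb k
    have hr0 := (hrb k).1
    have hr1 := (hrb k).2
    have hk1 : |(k₁:ℝ) * (k:ℝ)| ≤ |(k₁:ℝ)| * k := by
      rw [abs_mul, abs_of_nonneg (by positivity : (0:ℝ) ≤ (k:ℝ))]
    have habs : |u k - w k| ≤ |ε k| + (|(k₁:ℝ) * k| + |((r k : ℤ) : ℝ)|) / (k₂:ℝ) := by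
      rw [hu_eq k]
      have he : w k + ε k - ((k₁:ℝ) * k - ((r k : ℤ):ℝ)) / (k₂:ℝ) - w k
          = ε k - ((k₁:ℝ) * k - ((r k : ℤ):ℝ)) / (k₂:ℝ) := by ring
      rw [he]
      refine (abs_sub _ _).trans ?_
      gcongr
      rw [abs_div, abs_of_pos hk₂R]
      gcongr
      exact abs_sub _ _
    have hk₂1 : (1:ℝ) ≤ (k₂:ℝ) := by exact_mod_cast hk₂
    have habs2 : (|(k₁:ℝ) * k| + |((r k : ℤ) : ℝ)|) / (k₂:ℝ) ≤ |(k₁:ℝ)| * k + 1 := by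
      rw [div_le_iff₀ hk₂R]
      have hra : |((r k : ℤ) : ℝ)| ≤ (k₂:ℝ) := by
        rw [abs_of_nonneg hr0]; exact hr1.le
      nlinarith [abs_nonneg ((k₁:ℝ) * k), abs_nonneg ((r k : ℤ) : ℝ),
        mul_le_mul_of_nonneg_left hk₂1 (abs_nonneg ((k₁:ℝ)*k)),
        mul_nonneg (mul_nonneg (abs_nonneg (k₁:ℝ)) (Nat.cast_nonneg k : (0:ℝ) ≤ k)) (sub_nonneg.2 hk₂1)]
    calc |u k - w k| ≤ |ε k| + (|(k₁:ℝ) * k| + |((r k : ℤ) : ℝ)|) / (k₂:ℝ) := habs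
      _ ≤ 1/2 + (|(k₁:ℝ)| * k + 1) := by linarith
      _ = 3/2 + |(k₁:ℝ)| * k := by ring
  -- (u - w)/w → 0
  have hgeo : Tendsto (fun k : ℕ => (k:ℝ) / α ^ k) atTop (𝓝 0) := by
    have h := (isLittleO_pow_const_const_pow_of_one_lt (R := ℝ) 1 hα).tendsto_div_nhds_zero
    simpa using h
  have hinv : Tendsto (fun k : ℕ => (α ^ k)⁻¹) atTop (𝓝 0) :=
    (tendsto_pow_atTop_atTop_of_one_lt hα).inv_tendsto_atTop
  have hdiv0 : Tendsto (fun k => (u k - w k) / w k) atTop (𝓝 0) := by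
    refine squeeze_zero_norm (fun k => ?_)
      (a := fun k : ℕ => (3/2) / ζ * (α ^ k)⁻¹ + |(k₁:ℝ)| / ζ * ((k:ℝ) / α ^ k)) ?_
    · have hwk := hwpos k
      rw [Real.norm_eq_abs, abs_div, abs_of_pos hwk, div_le_iff₀ hwk]
      have hb := hbound k
      have hexp : ((3:ℝ)/2 / ζ * (α ^ k)⁻¹ + |(k₁:ℝ)| / ζ * ((k:ℝ) / α ^ k)) * w k
          = 3/2 + |(k₁:ℝ)| * k := by
        simp only [hwdef]
        field_simp
      rw [hexp]; exact hb
    · have h := ((hinv.const_mul ((3:ℝ)/2 / ζ)).add (hgeo.const_mul (|(k₁:ℝ)| / ζ)))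
      simpa using h
  have huw1 : Tendsto (fun k => u k / w k) atTop (𝓝 1) := by
    have h := hdiv0.add_const 1
    rw [zero_add] at h
    refine h.congr (fun k => ?_)
    field_simp [(hwpos k).ne']
    ring
  -- u → atTop
  have hu_top : Tendsto u atTop atTop := by
    have hev : ∀ᶠ k in atTop, (1:ℝ)/2 * w k ≤ u k := by
      filter_upwards [huw1.eventually (eventually_ge_nhds (by norm_num : (1:ℝ)/2 < 1))] with k hk
      have hwk := hwpos k
      rw [le_div_iff₀ hwk] at hk
      linarith
    refine tendsto_atTop_mono' _ hev ?_
    have h := (tendsto_pow_atTop_atTop_of_one_lt hα).const_mul_atTop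
      (by linarith : (0:ℝ) < 1/2 * ζ)
    refine h.congr (fun k => ?_)
    simp only [hwdef]; ring
  -- u (k+1) - u k → atTop
  have hstep_eq : ∀ k, u (k+1) - u k = (α - 1) * w k + (ε (k+1) - ε k)
      + (((r (k+1) : ℤ):ℝ) - ((r k : ℤ):ℝ) - (k₁:ℝ)) / (k₂:ℝ) := by
    intro k
    rw [hu_eq (k+1), hu_eq k, hwsucc k]
    push_cast
    ring
  have hstep : Tendsto (fun k => u (k+1) - u k) atTop atTop := by
    have hlow : ∀ k, (α - 1) * w k + (-2 - |(k₁:ℝ)| / (k₂:ℝ)) ≤ u (k+1) - u k := by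
      intro k
      rw [hstep_eq k]
      have h1 := abs_le.1 (hεb k)
      have h2 := abs_le.1 (hεb (k+1))
      have hr1 := hrb (k+1)
      have hr2 := hrb k
      have hk1 : -(|(k₁:ℝ)|) ≤ -(k₁:ℝ) := by
        have := le_abs_self (k₁:ℝ); linarith [neg_abs_le (k₁:ℝ)]
      have hfrac : (-(k₂:ℝ) - |(k₁:ℝ)|) / (k₂:ℝ)
          ≤ (((r (k+1) : ℤ):ℝ) - ((r k : ℤ):ℝ) - (k₁:ℝ)) / (k₂:ℝ) := by
        rw [div_le_div_iff₀ hk₂R hk₂R]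
        nlinarith [hr1.1, hr2.2, neg_abs_le (k₁:ℝ), hk₂R]
      have hfrac2 : (-(k₂:ℝ) - |(k₁:ℝ)|) / (k₂:ℝ) = -1 - |(k₁:ℝ)| / (k₂:ℝ) := by
        field_simp
      nlinarith [hfrac, hfrac2]
    refine tendsto_atTop_mono' _ (Eventually.of_forall hlow) ?_
    refine tendsto_atTop_add_const_right _ _ ?_
    have h := (tendsto_pow_atTop_atTop_of_one_lt hα).const_mul_atTop
      (by nlinarith : (0:ℝ) < (α - 1) * ζ)
    refine h.congr (fun k => ?_)
    simp only [hwdef]; ring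
  -- δ → 0
  set δ : ℕ → ℝ := fun k => Real.log (u k) - ((k:ℝ) * Real.log α + Real.log ζ) with hδdef
  have hδ0 : Tendsto δ atTop (𝓝 0) := by
    have hlog1 : Tendsto (fun k => Real.log (u k / w k)) atTop (𝓝 0) := by
      have h := (Real.continuousAt_log one_ne_zero).tendsto.comp huw1
      simpa [Function.comp_def] using h
    refine hlog1.congr' ?_
    filter_upwards [hu_top.eventually_gt_atTop 0] with k hk
    rw [Real.log_div hk.ne' (hwpos k).ne']
    simp only [hwdef, hδdef]
    rw [Real.log_mul hζpos.ne' (pow_ne_zero _ hα0.ne'), Real.log_pow]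
    ring
  -- β · log α
  have hβlog : β * Real.log α = (α - 1) * (k₁:ℝ) / (k₂:ℝ) := by
    rw [hβ]
    field_simp
  -- main identity
  have hS : ∀ k, u (k+1) - α * u k - β * Real.log (u k)
      = ε (k+1) - α * ε k - β * δ k
        + ((((r (k+1)) : ℤ):ℝ) - α * ((r k : ℤ):ℝ) - (k₁:ℝ)) / (k₂:ℝ)
        - β * Real.log ζ := by
    intro k
    have hlogu : Real.log (u k) = δ k + ((k:ℝ) * Real.log α + Real.log ζ) := by
      simp only [hδdef]; ring
    rw [hlogu, hu_eq (k+1), hu_eq k, hwsucc k]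
    push_cast
    linear_combination (-(k:ℝ)) * hβlog
  -- choose the shift K
  have hgood : ∀ᶠ k in atTop, 1 ≤ m k ∧ m k < m (k+1) := by
    filter_upwards [hu_top.eventually_ge_atTop 1, hstep.eventually_gt_atTop 0] with k hk1 hk2
    simp only [hudef] at hk1 hk2
    constructor
    · exact_mod_cast hk1
    · have h : ((m k : ℤ):ℝ) < ((m (k+1) : ℤ):ℝ) := by linarith
      exact_mod_cast h
  obtain ⟨K₀, hK₀⟩ := eventually_atTop.1 hgood
  set K : ℕ := K₀ * k₂ with hKdef
  have hKK₀ : K₀ ≤ K := Nat.le_mul_of_pos_right _ hk₂0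
  set n : ℕ → ℕ := fun k => (m (k + K)).toNat with hndef
  have hmpos : ∀ k, 1 ≤ m (k + K) := fun k =>
    (hK₀ _ (le_trans hKK₀ (Nat.le_add_left _ _))).1
  have hmlt : ∀ k, m (k + K) < m (k + 1 + K) := by
    intro k
    have h := (hK₀ (k + K) (le_trans hKK₀ (Nat.le_add_left _ _))).2
    have he : k + K + 1 = k + 1 + K := by ring
    rwa [he] at h
  have hncast : ∀ k, ((n k : ℕ) : ℝ) = u (k + K) := by
    intro k
    simp only [hndef, hudef]
    have h : ((m (k + K)).toNat : ℤ) = m (k + K) := Int.toNat_of_nonneg (by linarith [hmpos k])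
    exact_mod_cast h
  have hnpos : ∀ k, 0 < n k := by
    intro k
    have := hmpos k
    simp only [hndef]
    omega
  have hnmono : StrictMono n := by
    apply strictMono_nat_of_lt_succ
    intro k
    have h1 := hmpos k
    have h2 := hmlt k
    simp only [hndef]
    omega
  have hphase : ∀ k, phaseSeq α β n k
      = u (k + 1 + K) - α * u (k + K) - β * Real.log (u (k + K)) := by
    intro k
    unfold phaseSeq
    rw [hncast, hncast]
  -- convergence along each residue class
  have hmain : ∀ j, j < k₂ → ∃ L : ℝ,
      Tendsto (fun k => phaseSeq α β n (k * k₂ + j)) atTop (𝓝 L) := by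
    intro j hj
    refine ⟨((((r (j+1)) : ℤ):ℝ) - α * ((r j : ℤ):ℝ) - (k₁:ℝ)) / (k₂:ℝ)
      - β * Real.log ζ, ?_⟩
    set L : ℝ := ((((r (j+1)) : ℤ):ℝ) - α * ((r j : ℤ):ℝ) - (k₁:ℝ)) / (k₂:ℝ)
      - β * Real.log ζ with hLdef
    have hφ : Tendsto (fun k : ℕ => (k + K₀) * k₂ + j) atTop atTop := by
      apply tendsto_atTop_mono (fun k => ?_) tendsto_id
      calc (k : ℕ) = k * 1 := (Nat.mul_one k).symm
        _ ≤ k * k₂ := Nat.mul_le_mul_left k hk₂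
        _ ≤ (k + K₀) * k₂ := Nat.mul_le_mul_right k₂ (Nat.le_add_right k K₀)
        _ ≤ (k + K₀) * k₂ + j := Nat.le_add_right _ _
    have hφ1 : Tendsto (fun k : ℕ => (k + K₀) * k₂ + j + 1) atTop atTop :=
      tendsto_atTop_mono (fun k => Nat.le_succ _) hφ
    have key : Tendsto (fun k => ε ((k + K₀) * k₂ + j + 1) - α * ε ((k + K₀) * k₂ + j)
        - β * δ ((k + K₀) * k₂ + j) + L) atTop (𝓝 L) := by
      have h := (((hε0.comp hφ1).sub ((hε0.comp hφ).const_mul α)).sub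
        ((hδ0.comp hφ).const_mul β)).add_const L
      have h2 : (0:ℝ) - α * 0 - β * 0 + L = L := by ring
      rw [h2] at h
      exact h.congr (fun k => by simp only [Function.comp_apply])
    refine key.congr (fun k => ?_)
    have hidx : k * k₂ + j + K = (k + K₀) * k₂ + j := by
      simp only [hKdef]; ring
    have hidx1 : k * k₂ + j + 1 + K = (k + K₀) * k₂ + j + 1 := by
      simp only [hKdef]; ring
    rw [hphase, hidx, hidx1, hS ((k + K₀) * k₂ + j)]
    have hrj : r ((k + K₀) * k₂ + j) = r j := rAux_periodic k₁ k₂ _ _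
    have hrj1 : r ((k + K₀) * k₂ + j + 1) = r (j + 1) := by
      have he : (k + K₀) * k₂ + j + 1 = (k + K₀) * k₂ + (j + 1) := by omega
      rw [he]
      exact rAux_periodic k₁ k₂ _ _
    rw [hrj, hrj1, hLdef]
    ring
  -- boundedness
  have hbdd : ∀ j, j < k₂ → ∃ C : ℝ, ∀ k, |phaseSeq α β n (k * k₂ + j)| ≤ C := by
    intro j hj
    obtain ⟨L, hL⟩ := hmain j hj
    obtain ⟨C, hC⟩ := hL.abs.bddAbove_range
    exact ⟨C, fun k => hC ⟨k, rfl⟩⟩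
  choose! Cf hCf using hbdd
  refine ⟨n, hnmono, hnpos, ⟨∑ j ∈ Finset.range k₂, |Cf j|, ?_⟩, hmain⟩
  intro k
  have hjlt : k % k₂ < k₂ := Nat.mod_lt _ hk₂0
  have hkdm : (k / k₂) * k₂ + k % k₂ = k := by
    rw [Nat.mul_comm]
    exact Nat.div_add_mod k k₂
  calc |phaseSeq α β n k| = |phaseSeq α β n ((k / k₂) * k₂ + k % k₂)| := by rw [hkdm]
    _ ≤ Cf (k % k₂) := hCf _ hjlt _
    _ ≤ |Cf (k % k₂)| := le_abs_self _
    _ ≤ ∑ j ∈ Finset.range k₂, |Cf j| :=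
        Finset.single_le_sum (f := fun j => |Cf j|) (fun i _ => abs_nonneg _)
          (Finset.mem_range.2 hjlt)
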